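/- Fix n ≥ 1, a point x⁰ ∈ ℝⁿ, and a positive real h; consider the hypercube with all side lengths Δ_i = h, so Δ = hⁿ and Δ_S = h√n. Let f : ℝⁿ → ℝ be twice continuously differentiable on an open set containing R(x⁰;d) = {x⁰ + x : 0 ≤ x_i ≤ h}, with ∇f Lipschitz continuous with constant L_{∇f} on R(x⁰;d). Let L_n ∈ ℝ^{n×n} have entries [L_n]_{i,i} = 12(3n−2)/(h²(3n+1)) and [L_n]_{i,j} = −36/(h²(3n+1)) for i ≠ j, and let T_n ∈ ℝⁿ have components [T_n]_i = ∫ x_i (f(x⁰+x) − f(x⁰)) dx over the box [0,h]ⁿ. Then ‖Δ⁻¹ · L_n · T_n − ∇f(x⁰)‖ ≤ ((2n+1)/2) · L_{∇f} · Δ_S. -/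

import Mathlib

open scoped BigOperators

noncomputable section

/-- Interpret a plain vector in `Fin n → ℝ` as an element of Euclidean space,
so that `‖·‖` is the Euclidean norm. -/
def vecE {n : ℕ} (v : Fin n → ℝ) : EuclideanSpace ℝ (Fin n) :=
  (EuclideanSpace.equiv (Fin n) ℝ).symm v

/-- The cube `[0,h]ⁿ` in Euclidean space. -/
def cube (n : ℕ) (h : ℝ) : Set (EuclideanSpace ℝ (Fin n)) :=
  {x | ∀ l, x l ∈ Set.Icc (0 : ℝ) h}

/-- The limit matrix `Lₙ` for the hypercube of side `h`. -/
def LmatCube (n : ℕ) (h : ℝ) : Matrix (Fin n) (Fin n) ℝ :=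
  Matrix.of fun i j =>
    if i = j then 12 * (3 * (n : ℝ) - 2) / (h ^ 2 * (3 * (n : ℝ) + 1))
    else -36 / (h ^ 2 * (3 * (n : ℝ) + 1))

open MeasureTheory

lemma cube_eq_preimage (n : ℕ) (h : ℝ) :
    cube n h = (MeasurableEquiv.toLp 2 (Fin n → ℝ)).symm ⁻¹'
      (Set.univ.pi fun _ => Set.Icc (0:ℝ) h) := by
  ext x
  exact ⟨fun H l _ => H l, fun H l => H l (Set.mem_univ l)⟩

lemma integral_cube_prod {n : ℕ} {h : ℝ} (w : Fin n → ℝ → ℝ) :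
    ∫ x in cube n h, ∏ l, w l (x l) = ∏ l, ∫ t in Set.Icc (0:ℝ) h, w l t := by
  have e := EuclideanSpace.volume_preserving_symm_measurableEquiv_toLp (Fin n)
  rw [cube_eq_preimage]
  calc (∫ x in (MeasurableEquiv.toLp 2 (Fin n → ℝ)).symm ⁻¹'
          (Set.univ.pi fun _ => Set.Icc (0:ℝ) h), ∏ l, w l (x l))
      = ∫ y in (Set.univ.pi fun _ : Fin n => Set.Icc (0:ℝ) h),
          (fun y : Fin n → ℝ => ∏ l, w l (y l)) y :=
        e.setIntegral_preimage_emb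
          (MeasurableEquiv.toLp 2 (Fin n → ℝ)).symm.measurableEmbedding
          (fun y : Fin n → ℝ => ∏ l, w l (y l)) _
    _ = ∏ l, ∫ t in Set.Icc (0:ℝ) h, w l t := by
        rw [← MeasureTheory.integral_indicator
          (MeasurableSet.univ_pi fun _ => measurableSet_Icc)]
        have : (Set.univ.pi fun _ : Fin n => Set.Icc (0:ℝ) h).indicator
            (fun y : Fin n → ℝ => ∏ l, w l (y l))
            = fun y : Fin n → ℝ => ∏ l, (Set.Icc (0:ℝ) h).indicator (w l) (y l) := by
          funext y
          by_cases hy : y ∈ Set.univ.pi fun _ : Fin n => Set.Icc (0:ℝ) h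
          · rw [Set.indicator_of_mem hy]
            refine Finset.prod_congr rfl fun l _ => ?_
            rw [Set.indicator_of_mem (hy l (Set.mem_univ l))]
          · rw [Set.indicator_of_notMem hy]
            rw [Set.mem_pi] at hy
            push_neg at hy
            obtain ⟨l, -, hl⟩ := hy
            exact (Finset.prod_eq_zero (Finset.mem_univ l)
              (by rw [Set.indicator_of_notMem hl])).symm
        rw [this, MeasureTheory.integral_fintype_prod_volume_eq_prod]
        exact Finset.prod_congr rfl fun l _ =>
          MeasureTheory.integral_indicator measurableSet_Icc

lemma int_Icc_one {h : ℝ} (hh : 0 ≤ h) : ∫ _ in Set.Icc (0:ℝ) h, (1:ℝ) = h := by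
  simp [Real.volume_Icc, hh]

lemma int_Icc_pow {h : ℝ} (hh : 0 ≤ h) (k : ℕ) :
    ∫ t in Set.Icc (0:ℝ) h, t ^ k = h ^ (k+1) / (k+1) := by
  rw [MeasureTheory.integral_Icc_eq_integral_Ioc,
    ← intervalIntegral.integral_of_le hh]
  simp [integral_pow]

lemma prod_erase2 {n : ℕ} (j l : Fin n) (hjl : l ≠ j) (f : Fin n → ℝ) :
    ∏ m, f m = f j * (f l * ∏ m ∈ (Finset.univ.erase j).erase l, f m) := by
  rw [← Finset.mul_prod_erase _ f (Finset.mem_univ j),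
      ← Finset.mul_prod_erase _ f (Finset.mem_erase.mpr ⟨hjl, Finset.mem_univ l⟩)]

lemma card_erase2 {n : ℕ} (j l : Fin n) (hjl : l ≠ j) :
    ((Finset.univ.erase j).erase l).card = n - 2 := by
  rw [Finset.card_erase_of_mem (Finset.mem_erase.mpr ⟨hjl, Finset.mem_univ l⟩),
      Finset.card_erase_of_mem (Finset.mem_univ j)]
  simp; omega

lemma prod_ite_single {n : ℕ} (j : Fin n) (A C : ℝ) :
    ∏ m, (if m = j then A else C) = A * C ^ (n-1) := by
  rw [← Finset.mul_prod_erase _ _ (Finset.mem_univ j), if_pos rfl,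
    Finset.prod_congr rfl (fun m hm => if_neg (Finset.mem_erase.mp hm).1),
    Finset.prod_const, Finset.card_erase_of_mem (Finset.mem_univ j)]
  simp

lemma prod_ite_pair {n : ℕ} (j l : Fin n) (hjl : j ≠ l) (A B C : ℝ) :
    ∏ m, (if m = j then A else if m = l then B else C) = A * B * C ^ (n-2) := by
  rw [prod_erase2 j l hjl.symm, if_pos rfl, if_neg hjl.symm, if_pos rfl]
  have : ∀ m ∈ (Finset.univ.erase j).erase l,
      (if m = j then A else if m = l then B else C) = C := fun m hm => by
    rw [if_neg (Finset.mem_erase.mp (Finset.mem_erase.mp hm).2).1,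
        if_neg (Finset.mem_erase.mp hm).1]
  rw [Finset.prod_congr rfl this, Finset.prod_const, card_erase2 j l hjl.symm]
  ring

lemma moment2 {n : ℕ} {h : ℝ} (hh : 0 < h) (j l : Fin n) :
    ∫ x in cube n h, x j * x l
      = if j = l then h^(n+2)/3 else h^(n+2)/4 := by
  have h1 : 1 ≤ n := j.pos
  by_cases hjl : j = l
  · subst hjl
    rw [if_pos rfl]
    calc ∫ x in cube n h, x j * x j
        = ∫ x in cube n h, ∏ m, (if m = j then (x m)^2 else 1) := by
          refine integral_congr_ae (Filter.Eventually.of_forall fun x => ?_)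
          simp [Finset.prod_ite_eq', sq]
      _ = ∏ m, ∫ t in Set.Icc (0:ℝ) h, (if m = j then t^2 else 1) := by
          exact integral_cube_prod fun m t => if m = j then t^2 else 1
      _ = ∏ m, (if m = j then h^3/3 else h) := Finset.prod_congr rfl fun m _ => by
          split
          · rw [int_Icc_pow hh.le 2]; norm_num
          · exact int_Icc_one hh.le
      _ = (h^3/3) * h^(n-1) := prod_ite_single j _ _
      _ = h^(n+2)/3 := by
          rw [div_mul_eq_mul_div, ← pow_add]
          congr 2
          omega
  · rw [if_neg hjl]
    calc ∫ x in cube n h, x j * x l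
        = ∫ x in cube n h, ∏ m, (if m = j then x m else if m = l then x m else 1) := by
          refine integral_congr_ae (Filter.Eventually.of_forall fun x => ?_)
          show _ = ∏ m, _
          rw [prod_erase2 j l (Ne.symm hjl), if_pos rfl, if_neg (Ne.symm hjl), if_pos rfl,
            Finset.prod_congr rfl (fun m hm => by
              rw [if_neg (Finset.mem_erase.mp (Finset.mem_erase.mp hm).2).1,
                  if_neg (Finset.mem_erase.mp hm).1]),
            Finset.prod_const_one]
          ring
      _ = ∏ m, ∫ t in Set.Icc (0:ℝ) h, (if m = j then t else if m = l then t else 1) := by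
          exact integral_cube_prod fun m t => if m = j then t else if m = l then t else 1
      _ = ∏ m, (if m = j then h^2/2 else if m = l then h^2/2 else h) :=
          Finset.prod_congr rfl fun m _ => by
          split
          · rw [show (fun t : ℝ => t) = fun t : ℝ => t^1 from funext fun t => (pow_one t).symm,
              int_Icc_pow hh.le 1]; norm_num
          · split
            · rw [show (fun t : ℝ => t) = fun t : ℝ => t^1 from funext fun t => (pow_one t).symm,
                int_Icc_pow hh.le 1]; norm_num
            · exact int_Icc_one hh.le
      _ = (h^2/2) * (h^2/2) * h^(n-2) := prod_ite_pair j l hjl _ _ _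
      _ = h^(n+2)/4 := by
          have h2 : 2 ≤ n := by
            by_contra hc
            push_neg at hc
            interval_cases n
            exact hjl (Subsingleton.elim j l)
          rw [div_mul_div_comm, div_mul_eq_mul_div, ← pow_add, ← pow_add]
          norm_num
          congr 1
          omega

lemma moment3 {n : ℕ} {h : ℝ} (hh : 0 < h) (j l : Fin n) :
    ∫ x in cube n h, x j * (x l)^2
      = if j = l then h^(n+3)/4 else h^(n+3)/6 := by
  have h1 : 1 ≤ n := j.pos
  by_cases hjl : j = l
  · subst hjl
    rw [if_pos rfl]
    calc ∫ x in cube n h, x j * (x j)^2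
        = ∫ x in cube n h, ∏ m, (if m = j then (x m)^3 else 1) := by
          refine integral_congr_ae (Filter.Eventually.of_forall fun x => ?_)
          simp [Finset.prod_ite_eq']
          ring
      _ = ∏ m, ∫ t in Set.Icc (0:ℝ) h, (if m = j then t^3 else 1) := by
          exact integral_cube_prod fun m t => if m = j then t^3 else 1
      _ = ∏ m, (if m = j then h^4/4 else h) := Finset.prod_congr rfl fun m _ => by
          split
          · rw [int_Icc_pow hh.le 3]; norm_num
          · exact int_Icc_one hh.le
      _ = (h^4/4) * h^(n-1) := prod_ite_single j _ _
      _ = h^(n+3)/4 := by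
          rw [div_mul_eq_mul_div, ← pow_add]
          congr 2
          omega
  · rw [if_neg hjl]
    calc ∫ x in cube n h, x j * (x l)^2
        = ∫ x in cube n h, ∏ m, (if m = j then x m else if m = l then (x m)^2 else 1) := by
          refine integral_congr_ae (Filter.Eventually.of_forall fun x => ?_)
          show _ = ∏ m, _
          rw [prod_erase2 j l (Ne.symm hjl), if_pos rfl, if_neg (Ne.symm hjl), if_pos rfl,
            Finset.prod_congr rfl (fun m hm => by
              rw [if_neg (Finset.mem_erase.mp (Finset.mem_erase.mp hm).2).1,
                  if_neg (Finset.mem_erase.mp hm).1]),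
            Finset.prod_const_one]
          ring
      _ = ∏ m, ∫ t in Set.Icc (0:ℝ) h, (if m = j then t else if m = l then t^2 else 1) := by
          exact integral_cube_prod fun m t => if m = j then t else if m = l then t^2 else 1
      _ = ∏ m, (if m = j then h^2/2 else if m = l then h^3/3 else h) :=
          Finset.prod_congr rfl fun m _ => by
          split
          · rw [show (fun t : ℝ => t) = fun t : ℝ => t^1 from funext fun t => (pow_one t).symm,
              int_Icc_pow hh.le 1]; norm_num
          · split
            · rw [int_Icc_pow hh.le 2]; norm_num
            · exact int_Icc_one hh.le
      _ = (h^2/2) * (h^3/3) * h^(n-2) := prod_ite_pair j l hjl _ _ _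
      _ = h^(n+3)/6 := by
          have h2 : 2 ≤ n := by
            by_contra hc
            push_neg at hc
            interval_cases n
            exact hjl (Subsingleton.elim j l)
          rw [div_mul_div_comm, div_mul_eq_mul_div, ← pow_add, ← pow_add]
          norm_num
          congr 1
          omega


lemma sum_ite_mul {n : ℕ} (k : Fin n) (C D : ℝ) (v : Fin n → ℝ) :
    ∑ l, (if k = l then C else D) * v l = (C - D) * v k + D * ∑ l, v l := by
  have key : ∀ l, (if k = l then C else D) * v l
      = (if k = l then (C - D) * v l else 0) + D * v l := by
    intro l; split <;> ring
  rw [Finset.sum_congr rfl fun l _ => key l, Finset.sum_add_distrib,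
    Finset.sum_ite_eq Finset.univ k fun l => (C - D) * v l, ← Finset.mul_sum]
  simp

lemma isCompact_cube (n : ℕ) (h : ℝ) : IsCompact (cube n h) := by
  have hpre : cube n h = (EuclideanSpace.equiv (Fin n) ℝ).toHomeomorph ⁻¹'
      (Set.univ.pi fun _ => Set.Icc (0:ℝ) h) := by
    ext x; exact ⟨fun H l _ => H l, fun H l => H l (Set.mem_univ l)⟩
  rw [hpre]
  exact (Homeomorph.isCompact_preimage _).mpr (isCompact_univ_pi fun _ => isCompact_Icc)

lemma measurableSet_cube (n : ℕ) (h : ℝ) : MeasurableSet (cube n h) := by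
  rw [cube_eq_preimage]
  exact (MeasurableEquiv.toLp 2 (Fin n → ℝ)).symm.measurable
    (MeasurableSet.univ_pi fun _ => measurableSet_Icc)

lemma contCoord {n : ℕ} (j : Fin n) :
    Continuous fun x : EuclideanSpace ℝ (Fin n) => x j :=
  (EuclideanSpace.proj (𝕜 := ℝ) j).continuous

lemma remainder_bound
    (n : ℕ)
    (x0 : EuclideanSpace ℝ (Fin n))
    (h : ℝ) (hh : 0 < h)
    (f : EuclideanSpace ℝ (Fin n) → ℝ)
    (U : Set (EuclideanSpace ℝ (Fin n))) (hU : IsOpen U)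
    (hsub : {y : EuclideanSpace ℝ (Fin n) | ∀ l, y l - x0 l ∈ Set.Icc (0 : ℝ) h} ⊆ U)
    (hf : ContDiffOn ℝ 2 f U)
    (L : NNReal)
    (hlip : LipschitzOnWith L (gradient f)
      {y : EuclideanSpace ℝ (Fin n) | ∀ l, y l - x0 l ∈ Set.Icc (0 : ℝ) h})
    (x : EuclideanSpace ℝ (Fin n)) (hx : x ∈ cube n h) :
    |f (x0 + x) - f x0 - (inner ℝ (gradient f x0) x : ℝ)| ≤ (L : ℝ) / 2 * ‖x‖ ^ 2 := by
  set S := {y : EuclideanSpace ℝ (Fin n) | ∀ l, y l - x0 l ∈ Set.Icc (0 : ℝ) h} with hS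
  have hx0S : x0 ∈ S := fun l => by simp [hh.le]
  have hmem : ∀ t ∈ Set.Icc (0:ℝ) 1, x0 + t • x ∈ S := by
    intro t ht l
    have hxl := hx l
    have hcoord : (x0 + t • x) l - x0 l = t * x l := by
      simp [PiLp.add_apply, PiLp.smul_apply, smul_eq_mul]
    rw [hcoord]
    exact ⟨mul_nonneg ht.1 hxl.1,
      le_trans (mul_le_of_le_one_left hxl.1 ht.2) hxl.2⟩
  have hU' : ∀ t ∈ Set.Icc (0:ℝ) 1, x0 + t • x ∈ U := fun t ht => hsub (hmem t ht)
  have hgradcont : ContinuousOn (gradient f) U := by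
    have h1 : ContinuousOn (fderiv ℝ f) U :=
      hf.continuousOn_fderiv_of_isOpen hU (by norm_num)
    exact (InnerProductSpace.toDual ℝ
      (EuclideanSpace ℝ (Fin n))).symm.continuous.comp_continuousOn h1
  have hφ : ∀ t ∈ Set.Icc (0:ℝ) 1, HasDerivAt (fun s : ℝ => f (x0 + s • x))
      (inner ℝ (gradient f (x0 + t • x)) x : ℝ) t := by
    intro t ht
    have hd : DifferentiableAt ℝ f (x0 + t • x) :=
      (hf.contDiffAt (hU.mem_nhds (hU' t ht))).differentiableAt (by norm_num)
    have hg := hd.hasGradientAt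
    rw [hasGradientAt_iff_hasFDerivAt] at hg
    have hψ : HasDerivAt (fun s : ℝ => x0 + s • x) x t := by
      simpa using ((hasDerivAt_id t).smul_const x).const_add x0
    have hcomp := hg.comp_hasDerivAt t hψ
    simpa [InnerProductSpace.toDual_apply_apply, Function.comp_def] using hcomp
  have hcont : ContinuousOn (fun t : ℝ => (inner ℝ (gradient f (x0 + t • x)) x : ℝ))
      (Set.Icc (0:ℝ) 1) := by
    have hy : Continuous fun t : ℝ => x0 + t • x := by continuity
    have hg : ContinuousOn (fun t : ℝ => gradient f (x0 + t • x)) (Set.Icc (0:ℝ) 1) :=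
      hgradcont.comp hy.continuousOn hU'
    exact hg.inner continuousOn_const
  have hii : IntervalIntegrable (fun t : ℝ => (inner ℝ (gradient f (x0 + t • x)) x : ℝ))
      volume 0 1 :=
    (hcont.mono (by rw [Set.uIcc_of_le zero_le_one])).intervalIntegrable
  have hFTC : ∫ t in (0:ℝ)..1, (inner ℝ (gradient f (x0 + t • x)) x : ℝ)
      = f (x0 + x) - f x0 := by
    have := intervalIntegral.integral_eq_sub_of_hasDerivAt
      (f := fun s : ℝ => f (x0 + s • x))
      (f' := fun t : ℝ => (inner ℝ (gradient f (x0 + t • x)) x : ℝ))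
      (fun t ht => hφ t (by rwa [Set.uIcc_of_le zero_le_one] at ht)) hii
    simpa using this
  have key : f (x0 + x) - f x0 - (inner ℝ (gradient f x0) x : ℝ)
      = ∫ t in (0:ℝ)..1,
          ((inner ℝ (gradient f (x0 + t • x)) x : ℝ) - (inner ℝ (gradient f x0) x : ℝ)) := by
    rw [intervalIntegral.integral_sub hii intervalIntegrable_const, hFTC,
      intervalIntegral.integral_const]
    simp
  rw [key, ← Real.norm_eq_abs]
  have hbound : ∀ᵐ t ∂(volume.restrict (Set.uIoc (0:ℝ) 1)),
      ‖(inner ℝ (gradient f (x0 + t • x)) x : ℝ) - (inner ℝ (gradient f x0) x : ℝ)‖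
        ≤ (L : ℝ) * ‖x‖ ^ 2 * t := by
    refine (ae_restrict_mem measurableSet_uIoc).mono fun t ht => ?_
    rw [Set.uIoc_of_le zero_le_one] at ht
    have htI : t ∈ Set.Icc (0:ℝ) 1 := ⟨ht.1.le, ht.2⟩
    rw [← inner_sub_left, Real.norm_eq_abs]
    calc |(inner ℝ (gradient f (x0 + t • x) - gradient f x0) x : ℝ)|
        ≤ ‖gradient f (x0 + t • x) - gradient f x0‖ * ‖x‖ := abs_real_inner_le_norm _ _
      _ ≤ ((L : ℝ) * ‖(x0 + t • x) - x0‖) * ‖x‖ := by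
          apply mul_le_mul_of_nonneg_right _ (norm_nonneg x)
          have := hlip.dist_le_mul _ (hmem t htI) _ hx0S
          rwa [dist_eq_norm, dist_eq_norm] at this
      _ = (L : ℝ) * ‖x‖ ^ 2 * t := by
          have : x0 + t • x - x0 = t • x := by abel
          rw [this, norm_smul, Real.norm_eq_abs, abs_of_nonneg ht.1.le]
          ring
  have hgii : IntervalIntegrable (fun t : ℝ => (L : ℝ) * ‖x‖ ^ 2 * t) volume 0 1 :=
    (continuous_const.mul continuous_id).intervalIntegrable 0 1
  calc ‖∫ t in (0:ℝ)..1,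
        ((inner ℝ (gradient f (x0 + t • x)) x : ℝ) - (inner ℝ (gradient f x0) x : ℝ))‖
      ≤ |∫ t in (0:ℝ)..1, (L : ℝ) * ‖x‖ ^ 2 * t| :=
        intervalIntegral.norm_integral_le_abs_of_norm_le hbound hgii
    _ = (L : ℝ) / 2 * ‖x‖ ^ 2 := by
        rw [intervalIntegral.integral_const_mul, integral_id]
        rw [abs_of_nonneg (by positivity)]
        ring


set_option maxHeartbeats 1000000 in
/-- Theorem 4.5 of the paper (error bound ad infinitum, hypercube case):
`‖Δ⁻¹·Lₙ·Tₙ − ∇f(x⁰)‖ ≤ ((2n+1)/2)·L_{∇f}·Δ_S`, with `Δ = hⁿ`, `Δ_S = h√n`. -/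
theorem error_bound_ad_infinitum_hypercube
    (n : ℕ) (hn : 1 ≤ n)
    (x0 : EuclideanSpace ℝ (Fin n))
    (h : ℝ) (hh : 0 < h)
    (f : EuclideanSpace ℝ (Fin n) → ℝ)
    (U : Set (EuclideanSpace ℝ (Fin n))) (hU : IsOpen U)
    (hsub : {y : EuclideanSpace ℝ (Fin n) | ∀ l, y l - x0 l ∈ Set.Icc (0 : ℝ) h} ⊆ U)
    (hf : ContDiffOn ℝ 2 f U)
    (L : NNReal)
    (hlip : LipschitzOnWith L (gradient f)
      {y : EuclideanSpace ℝ (Fin n) | ∀ l, y l - x0 l ∈ Set.Icc (0 : ℝ) h}) :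
    ‖vecE ((h ^ n : ℝ)⁻¹ •
        Matrix.mulVec (LmatCube n h)
          (fun j => ∫ x in cube n h, x j * (f (x0 + x) - f x0)))
      - gradient f x0‖
      ≤ ((2 * (n : ℝ) + 1) / 2) * (L : ℝ) * (h * Real.sqrt n) := by
  classical
  have hne : (h : ℝ) ≠ 0 := ne_of_gt hh
  have hpn : (0:ℝ) < h ^ n := pow_pos hh n
  have hpnne : (h:ℝ)^n ≠ 0 := ne_of_gt hpn
  have h3n : (0:ℝ) < 3*(n:ℝ)+1 := by positivity
  have hcpt := isCompact_cube n h
  have hmeas := measurableSet_cube n h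
  set g : EuclideanSpace ℝ (Fin n) := gradient f x0 with hgdef
  set d1 : ℝ := 12 * (3 * (n : ℝ) - 2) / (h ^ 2 * (3 * (n : ℝ) + 1)) with hd1
  set d2 : ℝ := -36 / (h ^ 2 * (3 * (n : ℝ) + 1)) with hd2
  set c3 : ℝ := h^(n+2)/3 with hc3
  set c4 : ℝ := h^(n+2)/4 with hc4
  set q4 : ℝ := h^(n+3)/4 with hq4
  set q6 : ℝ := h^(n+3)/6 with hq6
  set M : ℝ := (L:ℝ)/2 * ((q4 - q6) + (n:ℝ) * q6) with hMdef
  have hd2neg : d2 ≤ 0 := by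
    rw [hd2]
    apply div_nonpos_of_nonpos_of_nonneg <;> nlinarith [sq_nonneg h]
  -- membership of translates
  have hmemU : ∀ x ∈ cube n h, x0 + x ∈ U := by
    intro x hx
    apply hsub
    intro l
    have hxl : (x0 + x) l - x0 l = x l := by
      simp [PiLp.add_apply]
    rw [hxl]; exact hx l
  have hfc : ContinuousOn (fun x : EuclideanSpace ℝ (Fin n) => f (x0 + x)) (cube n h) := by
    have hc : Continuous fun x : EuclideanSpace ℝ (Fin n) => x0 + x :=
      continuous_const.add continuous_id
    exact (hf.continuousOn).comp hc.continuousOn hmemU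
  set Sg : EuclideanSpace ℝ (Fin n) → ℝ := fun x => ∑ l, g l * x l with hSg
  set r : EuclideanSpace ℝ (Fin n) → ℝ := fun x => f (x0 + x) - f x0 - Sg x with hrdef
  have hSgc : Continuous Sg := by
    apply continuous_finset_sum
    intro l _
    exact continuous_const.mul (contCoord l)
  have hrc : ContinuousOn r (cube n h) := (hfc.sub continuousOn_const).sub hSgc.continuousOn
  have hinner : ∀ x : EuclideanSpace ℝ (Fin n), (inner ℝ g x : ℝ) = Sg x := by
    intro x
    simp [hSg, PiLp.inner_apply, RCLike.inner_apply, starRingEnd_apply, mul_comm]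
  have hnormsq : ∀ x : EuclideanSpace ℝ (Fin n), ‖x‖^2 = ∑ l, (x l)^2 := by
    intro x
    rw [EuclideanSpace.norm_eq, Real.sq_sqrt (by positivity)]
    simp [Real.norm_eq_abs, sq_abs]
  have hrem : ∀ x ∈ cube n h, |r x| ≤ (L:ℝ)/2 * ∑ l, (x l)^2 := by
    intro x hx
    have hb := remainder_bound n x0 h hh f U hU hsub hf L hlip x hx
    rw [hinner x, hnormsq x] at hb
    simpa [hrdef] using hb
  -- the data vector and its decomposition
  set T : Fin n → ℝ := fun j => ∫ x in cube n h, x j * (f (x0 + x) - f x0) with hTdef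
  set A : Fin n → ℝ := fun j => ∫ x in cube n h, x j * Sg x with hAdef
  set Er : Fin n → ℝ := fun j => ∫ x in cube n h, x j * r x with hErdef
  set s : ℝ := ∑ j, Er j with hsdef
  have intA : ∀ j : Fin n, IntegrableOn (fun x : EuclideanSpace ℝ (Fin n) => x j * Sg x)
      (cube n h) := fun j =>
    (((contCoord j).mul hSgc).continuousOn).integrableOn_compact hcpt
  have intEr : ∀ j : Fin n, IntegrableOn (fun x : EuclideanSpace ℝ (Fin n) => x j * r x)
      (cube n h) := fun j =>
    ((contCoord j).continuousOn.mul hrc).integrableOn_compact hcpt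
  have hT : ∀ j, T j = A j + Er j := by
    intro j
    simp only [hTdef, hAdef, hErdef]
    have hsplit : ∀ x ∈ cube n h, x j * (f (x0 + x) - f x0) = x j * Sg x + x j * r x := by
      intro x _
      rw [hrdef]
      ring
    rw [setIntegral_congr_fun hmeas hsplit, integral_add (intA j) (intEr j)]
  have hA : ∀ j, A j = ∑ l, (if j = l then c3 else c4) * g l := by
    intro j
    simp only [hAdef]
    have h1 : ∀ x ∈ cube n h, x j * Sg x = ∑ l, g l * (x j * x l) := by
      intro x _
      rw [hSg, Finset.mul_sum]
      exact Finset.sum_congr rfl fun l _ => by ring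
    rw [setIntegral_congr_fun hmeas h1,
      integral_finset_sum _ (fun l _ => by exact
        ((continuous_const.mul ((contCoord j).mul (contCoord l))).continuousOn).integrableOn_compact hcpt)]
    refine Finset.sum_congr rfl fun l _ => ?_
    rw [integral_const_mul, moment2 hh j l]
    rw [hc3, hc4]
    split <;> ring
  have hA' : ∀ k, A k = (c3 - c4) * g k + c4 * ∑ l, g l := by
    intro k
    rw [hA k, sum_ite_mul]
  -- the error bound on each component
  have hMnonneg : 0 ≤ M := by
    rw [hMdef, hq4, hq6]
    have h1 : (1:ℝ) ≤ (n:ℝ) := by exact_mod_cast hn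
    have hp : (0:ℝ) ≤ h^(n+3) := by positivity
    have h2 : 0 ≤ h^(n+3)/4 - h^(n+3)/6 + (n:ℝ)*(h^(n+3)/6) := by nlinarith
    exact mul_nonneg (by positivity) h2
  have hErM : ∀ j, |Er j| ≤ M := by
    intro j
    have hGint : IntegrableOn
        (fun x : EuclideanSpace ℝ (Fin n) => (L:ℝ)/2 * (x j * ∑ l, (x l)^2))
        (cube n h) := by
      refine (Continuous.continuousOn ?_).integrableOn_compact hcpt
      exact continuous_const.mul ((contCoord j).mul
        (continuous_finset_sum _ fun l _ => (contCoord l).pow 2))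
    have hae : ∀ᵐ x ∂(volume.restrict (cube n h)),
        ‖x j * r x‖ ≤ (L:ℝ)/2 * (x j * ∑ l, (x l)^2) := by
      refine (ae_restrict_mem hmeas).mono fun x hx => ?_
      have hxj : 0 ≤ x j := (hx j).1
      rw [Real.norm_eq_abs, abs_mul, abs_of_nonneg hxj]
      calc x j * |r x| ≤ x j * ((L:ℝ)/2 * ∑ l, (x l)^2) :=
            mul_le_mul_of_nonneg_left (hrem x hx) hxj
        _ = (L:ℝ)/2 * (x j * ∑ l, (x l)^2) := by ring
    have hle : ‖Er j‖ ≤ ∫ x in cube n h, (L:ℝ)/2 * (x j * ∑ l, (x l)^2) := by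
      simp only [hErdef]
      exact norm_integral_le_of_norm_le hGint hae
    have hval : (∫ x in cube n h, (L:ℝ)/2 * (x j * ∑ l, (x l)^2)) = M := by
      rw [integral_const_mul]
      have h1 : ∀ x ∈ cube n h, x j * ∑ l, (x l)^2 = ∑ l, x j * (x l)^2 := by
        intro x _
        rw [Finset.mul_sum]
      rw [setIntegral_congr_fun hmeas h1,
        integral_finset_sum _ (fun l _ => by exact
          (((contCoord j).mul ((contCoord l).pow 2)).continuousOn).integrableOn_compact hcpt)]
      have h2 : ∀ l : Fin n, (∫ x in cube n h, x j * (x l)^2)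
          = if j = l then q4 else q6 := by
        intro l
        rw [moment3 hh j l, hq4, hq6]
      rw [Finset.sum_congr rfl fun l _ => h2 l]
      have h3 : ∑ l : Fin n, (if j = l then q4 else q6) = (q4 - q6) + (n:ℝ) * q6 := by
        have hsim := sum_ite_mul j q4 q6 (fun _ => (1:ℝ))
        simp [Finset.card_univ] at hsim
        linarith [hsim]
      rw [h3, hMdef]
    rw [← Real.norm_eq_abs]
    calc ‖Er j‖ ≤ ∫ x in cube n h, (L:ℝ)/2 * (x j * ∑ l, (x l)^2) := hle
      _ = M := hval
  -- the matrix-vector product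
  have hrow : ∀ (v : Fin n → ℝ) (j : Fin n),
      Matrix.mulVec (LmatCube n h) v j = ∑ k, (if j = k then d1 else d2) * v k := by
    intro v j
    simp [Matrix.mulVec, dotProduct, LmatCube, hd1, hd2]
  have hmv : ∀ j, Matrix.mulVec (LmatCube n h) T j
      = h^n * g j + ((d1 - d2) * Er j + d2 * s) := by
    intro j
    rw [hrow]
    have hsplit : ∀ k : Fin n, (if j = k then d1 else d2) * T k
        = (if j = k then d1 else d2) * A k + (if j = k then d1 else d2) * Er k := by
      intro k
      rw [hT k]
      ring
    rw [Finset.sum_congr rfl fun k _ => hsplit k, Finset.sum_add_distrib,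
      sum_ite_mul, sum_ite_mul]
    have hsumA : ∑ k, A k = (c3 - c4) * (∑ l, g l) + (n:ℝ) * (c4 * ∑ l, g l) := by
      rw [Finset.sum_congr rfl fun k _ => hA' k, Finset.sum_add_distrib,
        ← Finset.mul_sum, Finset.sum_const, Finset.card_univ, Fintype.card_fin,
        nsmul_eq_mul]
    rw [hA' j, hsumA, ← hsdef]
    have hkey : (d1 - d2) * ((c3 - c4) * g j + c4 * ∑ l, g l)
        + d2 * ((c3 - c4) * (∑ l, g l) + (n:ℝ) * (c4 * ∑ l, g l)) = h^n * g j := by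
      have hpw : h^(n+2) = h^n * h^2 := pow_add h n 2
      rw [hd1, hd2, hc3, hc4, hpw]
      field_simp
      ring
    linear_combination hkey
  -- coordinates of the final vector
  have hWg : ∀ j, (vecE ((h ^ n : ℝ)⁻¹ • Matrix.mulVec (LmatCube n h) T) - g) j
      = (h^n : ℝ)⁻¹ * ((d1 - d2) * Er j + d2 * s) := by
    intro j
    have h1 : (vecE ((h ^ n : ℝ)⁻¹ • Matrix.mulVec (LmatCube n h) T) - g) j
        = (h^n : ℝ)⁻¹ * Matrix.mulVec (LmatCube n h) T j - g j := by
      simp [vecE, smul_eq_mul]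
    rw [h1, hmv j]
    field_simp
    ring
  -- the norm estimate
  have hnorm : ‖vecE ((h ^ n : ℝ)⁻¹ • Matrix.mulVec (LmatCube n h) T) - g‖
      = Real.sqrt (∑ j, ((h^n : ℝ)⁻¹ * ((d1 - d2) * Er j + d2 * s))^2) := by
    rw [EuclideanSpace.norm_eq]
    congr 1
    refine Finset.sum_congr rfl fun j _ => ?_
    rw [hWg j, Real.norm_eq_abs, sq_abs]
  have hsum_le : ∑ j, ((h^n : ℝ)⁻¹ * ((d1 - d2) * Er j + d2 * s))^2
      ≤ ((h^n : ℝ)⁻¹)^2 * ((d1 - d2)^2 * ((n:ℝ) * M^2)) := by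
    have hexp : ∑ j, ((d1 - d2) * Er j + d2 * s)^2
        = (d1 - d2)^2 * (∑ j, (Er j)^2) + (2*(d1 - d2)*d2 + (n:ℝ)*d2^2) * s^2 := by
      have hterm : ∀ j : Fin n, ((d1 - d2) * Er j + d2 * s)^2
          = (d1 - d2)^2 * (Er j)^2 + (2*(d1 - d2)*d2*s) * Er j + d2^2 * s^2 := by
        intro j; ring
      rw [Finset.sum_congr rfl fun j _ => hterm j, Finset.sum_add_distrib,
        Finset.sum_add_distrib, ← Finset.mul_sum, ← Finset.mul_sum, ← hsdef,
        Finset.sum_const, Finset.card_univ, Fintype.card_fin, nsmul_eq_mul]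
      ring
    have hErsq : ∑ j, (Er j)^2 ≤ (n:ℝ) * M^2 := by
      calc ∑ j, (Er j)^2 ≤ ∑ _j : Fin n, M^2 := by
            refine Finset.sum_le_sum fun j _ => ?_
            rw [← sq_abs]
            exact pow_le_pow_left₀ (abs_nonneg _) (hErM j) 2
        _ = (n:ℝ) * M^2 := by
            rw [Finset.sum_const, Finset.card_univ, Fintype.card_fin, nsmul_eq_mul]
    have h2nd : (2*(d1 - d2)*d2 + (n:ℝ)*d2^2) * s^2 ≤ 0 := by
      have hfac : 2*(d1 - d2)*d2 + (n:ℝ)*d2^2 = d2 * (2*(d1 - d2) + (n:ℝ)*d2) := by ring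
      have hpos : 0 ≤ 2*(d1 - d2) + (n:ℝ)*d2 := by
        have heq : 2*(d1 - d2) + (n:ℝ)*d2 = (36*(n:ℝ)+24) / (h^2*(3*(n:ℝ)+1)) := by
          rw [hd1, hd2]
          field_simp
          ring
        rw [heq]
        positivity
      rw [hfac]
      exact mul_nonpos_of_nonpos_of_nonneg
        (mul_nonpos_of_nonpos_of_nonneg hd2neg hpos) (sq_nonneg s)
    calc ∑ j, ((h^n : ℝ)⁻¹ * ((d1 - d2) * Er j + d2 * s))^2
        = ((h^n : ℝ)⁻¹)^2 * ∑ j, ((d1 - d2) * Er j + d2 * s)^2 := by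
          have hptw : ∀ j : Fin n, ((h^n : ℝ)⁻¹ * ((d1 - d2) * Er j + d2 * s))^2
              = ((h^n : ℝ)⁻¹)^2 * ((d1 - d2) * Er j + d2 * s)^2 := fun j => by ring
          rw [Finset.sum_congr rfl fun j _ => hptw j, ← Finset.mul_sum]
      _ ≤ ((h^n : ℝ)⁻¹)^2 * ((d1 - d2)^2 * ((n:ℝ) * M^2)) := by
          apply mul_le_mul_of_nonneg_left _ (sq_nonneg _)
          rw [hexp]
          nlinarith [hErsq, h2nd, sq_nonneg (d1 - d2)]
  have hRHS : ((h^n : ℝ)⁻¹)^2 * ((d1 - d2)^2 * ((n:ℝ) * M^2))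
      = (((2 * (n : ℝ) + 1) / 2) * (L : ℝ) * (h * Real.sqrt n))^2 := by
    have hs2 : Real.sqrt (n:ℝ) ^ 2 = (n:ℝ) := Real.sq_sqrt (Nat.cast_nonneg n)
    have hpw : h^(n+3) = h^n * h^3 := pow_add h n 3
    have hexp2 : (((2 * (n : ℝ) + 1) / 2) * (L : ℝ) * (h * Real.sqrt n))^2
        = (((2 * (n : ℝ) + 1) / 2) * (L : ℝ) * h)^2 * (n:ℝ) := by
      rw [mul_pow ((2 * (n:ℝ) + 1) / 2 * (L:ℝ)) (h * Real.sqrt n) 2,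
        mul_pow h (Real.sqrt n) 2, hs2]
      ring
    rw [hexp2, hMdef, hq4, hq6, hd1, hd2, hpw]
    field_simp
    ring
  rw [hnorm]
  calc Real.sqrt (∑ j, ((h^n : ℝ)⁻¹ * ((d1 - d2) * Er j + d2 * s))^2)
      ≤ Real.sqrt ((((2 * (n : ℝ) + 1) / 2) * (L : ℝ) * (h * Real.sqrt n))^2) := by
        apply Real.sqrt_le_sqrt
        rw [← hRHS]
        exact hsum_le
    _ = ((2 * (n : ℝ) + 1) / 2) * (L : ℝ) * (h * Real.sqrt n) := by
        apply Real.sqrt_sq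
        positivity

end
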